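/- arXiv:0706.2348 — 2 statements merged into one kernel-verified Lean document; each statement's English description precedes it below -/
import Mathlib

section
/- Let 0 < R₁ < R₂ and let φ be a function analytic on the disk {w ∈ ℂ : |w| < R₂}, continuous on {|w| ≤ R₂}, with a zero of order two at w = 0. Then max_{|w| ≤ R₁} |φ′(w)| ≤ (1 − R₁/R₂)^{−1} · max_{0<|w| ≤ R₂} |φ(w)|/|w|. -/
open Complex Set Metric

/-- Cauchy-type estimate: if `0 < R₁ < R₂` and `φ` is analytic on `|w| < R₂`,
continuous on `|w| ≤ R₂`, with a zero of order two at `w = 0` (i.e. `φ(0) = φ′(0) = 0`), then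
`max_{|w|≤R₁} |φ′(w)| ≤ (1 - R₁/R₂)⁻¹ · max_{0<|w|≤R₂} |φ(w)|/|w|` (stated for an arbitrary
upper bound `M` of `|φ(w)|/|w|` on `0 < |w| ≤ R₂`). -/
theorem stmt10 (R₁ R₂ : ℝ) (h1 : 0 < R₁) (h12 : R₁ < R₂)
    (φ : ℂ → ℂ)
    (hφ : DifferentiableOn ℂ φ (ball (0 : ℂ) R₂))
    (hφc : ContinuousOn φ (closedBall (0 : ℂ) R₂))
    (hφ0 : φ 0 = 0) (hφ'0 : deriv φ 0 = 0) :
    ∀ M : ℝ, (∀ z : ℂ, z ≠ 0 → ‖z‖ ≤ R₂ → ‖φ z‖ ≤ M * ‖z‖) →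
      ∀ w : ℂ, ‖w‖ ≤ R₁ → ‖deriv φ w‖ ≤ (1 - R₁ / R₂)⁻¹ * M := by
  intro M hM w hw
  have hR₂ : (0 : ℝ) < R₂ := h1.trans h12
  have hM0 : 0 ≤ M := by
    have := hM (R₂ : ℂ) (by exact_mod_cast hR₂.ne') (by simp [abs_of_pos hR₂])
    have hnorm : ‖(R₂ : ℂ)‖ = R₂ := by simp [abs_of_pos hR₂]
    nlinarith [norm_nonneg (φ (R₂ : ℂ))]
  set g : ℂ → ℂ := dslope φ 0 with hg
  -- bound on g over the closed ball
  have hgbound : ∀ z ∈ closedBall (0 : ℂ) R₂, ‖g z‖ ≤ M := by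
    intro z hz
    rcases eq_or_ne z 0 with rfl | hz0
    · simp [hg, dslope_same, hφ'0, hM0]
    · rw [hg, dslope_of_ne _ hz0, slope_def_field]
      simp only [sub_zero, hφ0]
      rw [div_eq_mul_inv, norm_mul, norm_inv]
      have hzle : ‖z‖ ≤ R₂ := by simpa using hz
      have hzpos : (0 : ℝ) < ‖z‖ := norm_pos_iff.2 hz0
      calc ‖φ z‖ * ‖z‖⁻¹ ≤ (M * ‖z‖) * ‖z‖⁻¹ := by
            gcongr; exact hM z hz0 hzle
        _ = M := by
            rw [mul_assoc, mul_inv_cancel₀ hzpos.ne', mul_one]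
  -- g is differentiable on the ball and continuous on the closed ball
  have hgd : DifferentiableOn ℂ g (ball (0 : ℂ) R₂) :=
    (Complex.differentiableOn_dslope (ball_mem_nhds _ hR₂)).2 hφ
  have hgc : ContinuousOn g (closedBall (0 : ℂ) R₂) := by
    refine (continuousOn_dslope (closedBall_mem_nhds _ hR₂)).2 ⟨hφc, ?_⟩
    exact (hφ.differentiableAt (ball_mem_nhds _ hR₂))
  -- Cauchy estimate for deriv g at w
  have hsub : ball w (R₂ - R₁) ⊆ ball (0 : ℂ) R₂ := by
    intro z hz
    simp only [mem_ball, dist_zero_right, dist_eq_norm] at hz ⊢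
    rw [sub_zero]
    calc ‖z‖ ≤ ‖z - w‖ + ‖w‖ := by
          simpa using norm_add_le (z - w) w
      _ < (R₂ - R₁) + R₁ := by exact add_lt_add_of_lt_of_le hz hw
      _ = R₂ := by ring
  have hsubc : closedBall w (R₂ - R₁) ⊆ closedBall (0 : ℂ) R₂ := by
    intro z hz
    simp only [mem_closedBall, dist_zero_right, dist_eq_norm] at hz ⊢
    rw [sub_zero]
    calc ‖z‖ ≤ ‖z - w‖ + ‖w‖ := by
          simpa using norm_add_le (z - w) w
      _ ≤ (R₂ - R₁) + R₁ := add_le_add hz hw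
      _ = R₂ := by ring
  have hr : (0 : ℝ) < R₂ - R₁ := by linarith
  have hdcc : DiffContOnCl ℂ g (ball w (R₂ - R₁)) := by
    refine ⟨hgd.mono hsub, ?_⟩
    refine hgc.mono ?_
    exact (closure_ball_subset_closedBall).trans hsubc
  have hderivg : ‖deriv g w‖ ≤ M / (R₂ - R₁) := by
    refine Complex.norm_deriv_le_of_forall_mem_sphere_norm_le hr hdcc fun z hz => ?_
    exact hgbound z (hsubc (sphere_subset_closedBall hz))
  -- φ z = z * g z, so deriv φ w = g w + w * deriv g w
  have hφeq : φ = fun z => z * g z := by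
    funext z
    have := sub_smul_dslope φ 0 z
    simp only [sub_zero, hφ0, smul_eq_mul] at this
    rw [← hg] at this
    simp [this]
  have hwball : w ∈ ball (0 : ℂ) R₂ := by
    simp only [mem_ball, dist_zero_right]
    exact lt_of_le_of_lt hw h12
  have hgdiffw : DifferentiableAt ℂ g w :=
    hgd.differentiableAt (isOpen_ball.mem_nhds hwball)
  have hderiv : deriv φ w = g w + w * deriv g w := by
    rw [hφeq]
    rw [deriv_fun_mul differentiableAt_fun_id hgdiffw]
    simp
  rw [hderiv]
  have hgw : ‖g w‖ ≤ M := hgbound w (by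
    simp only [mem_closedBall, dist_zero_right]; linarith)
  have h2 : ‖w * deriv g w‖ ≤ R₁ * (M / (R₂ - R₁)) := by
    rw [norm_mul]
    exact mul_le_mul hw hderivg (norm_nonneg _) h1.le
  calc ‖g w + w * deriv g w‖ ≤ ‖g w‖ + ‖w * deriv g w‖ := norm_add_le _ _
    _ ≤ M + R₁ * (M / (R₂ - R₁)) := add_le_add hgw h2
    _ = (1 - R₁ / R₂)⁻¹ * M := by
        rw [one_sub_div hR₂.ne']
        rw [inv_div]
        field_simp
        ring
end

section
/- Suppose f ∈ Π has a zero of order p ≥ 2 at w = 0, i.e. f_n ≡ 0 for all n < p. Then Φ[f](w) = Σ_{n≥p} Φ_n[f_n] wⁿ and h(x,w) = Σ_{n≥p} J_n[f_n](x) wⁿ have zeros of order ≥ p at w = 0, and—under the hypotheses guaranteeing that the compositions are defined on Δ_δ—the remainder R₀[f](x,w) = f(x, w+h(x,w)) − f(x,w) − Φ[f](w+h(x,w)) + Φ[f](w), and hence also R[f] = (1 + ∂_w h)^{−1} R₀[f], has a zero of order ≥ 2p−1 at w = 0. -/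
open Complex Set Metric

/-- The Beta function `B(p,q) = Γ(p)Γ(q)/Γ(p+q)`. -/
noncomputable def cBeta (p q : ℂ) : ℂ := Complex.Gamma p * Complex.Gamma q / Complex.Gamma (p + q)

/-- The functional `Φ_{ν+1}[F] = (2^{1-ν(a+b)}/B(νa,νb)) ∫_{-1}^1 (1-t)^{νa-1}(1+t)^{νb-1} F(t) dt`
(principal complex powers). -/
noncomputable def PhiOp (a b ν : ℂ) (F : ℂ → ℂ) : ℂ :=
  (2 : ℂ) ^ (1 - ν * (a + b)) / cBeta (ν * a) (ν * b) *
    ∫ t in (-1 : ℝ)..1, (1 - (t : ℂ)) ^ (ν * a - 1) * (1 + (t : ℂ)) ^ (ν * b - 1) * F (t : ℂ)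

/-- The operator `J_{ν+1}[F](z) = (1-z)^{-νa}(1+z)^{-νb} ∫_{-1}^z
(1-t)^{νa-1}(1+t)^{νb-1}(F(t)-Φ_{ν+1}[F]) dt`, the integral being taken along the straight
segment from `-1` to `z`, parametrized by `t = -1 + s(z+1)`, `s ∈ [0,1]`. -/
noncomputable def JOp (a b ν : ℂ) (F : ℂ → ℂ) (z : ℂ) : ℂ :=
  (1 - z) ^ (-(ν * a)) * (1 + z) ^ (-(ν * b)) *
    ∫ s in (0 : ℝ)..1, (z + 1) *
      ((1 - (-1 + (s : ℂ) * (z + 1))) ^ (ν * a - 1) * (1 + (-1 + (s : ℂ) * (z + 1))) ^ (ν * b - 1) *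
        (F (-1 + (s : ℂ) * (z + 1)) - PhiOp a b ν F))

/-- Points off the two branch cuts `(-∞,-1]` and `[1,∞)` of the principal powers. -/
def OffCut (z : ℂ) : Prop := z.im ≠ 0 ∨ (-1 < z.re ∧ z.re < 1)

/-- Hypotheses defining the space `Π` on the polydisk `Δ_{ρ,R}`: `f` is analytic on
`Δ_{ρ,R} = {(x,w) : |x-c| < ρ, |w| < R}`, continuous on its closure, has a zero of order two
at `w = 0`, and `fc n` are its Taylor coefficients in `w`: `f(x,w) = Σ_{n≥2} fc n (x) wⁿ`. -/
def PiSetup (c : ℂ) (ρ R : ℝ) (f : ℂ → ℂ → ℂ) (fc : ℕ → ℂ → ℂ) : Prop :=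
  DifferentiableOn ℂ (fun p : ℂ × ℂ => f p.1 p.2) (Metric.ball c ρ ×ˢ Metric.ball (0 : ℂ) R) ∧
  ContinuousOn (fun p : ℂ × ℂ => f p.1 p.2)
    (Metric.closedBall c ρ ×ˢ Metric.closedBall (0 : ℂ) R) ∧
  fc 0 = 0 ∧ fc 1 = 0 ∧
  ∀ x ∈ Metric.ball c ρ, ∀ w ∈ Metric.ball (0 : ℂ) R,
    HasSum (fun n => fc n x * w ^ n) (f x w)

/-- `hJ n` is the analytic extension of `J_n[f_n] = JOp a b (n-1) (fc n)` to the disk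
`D_ρ` (they agree off the branch cuts, where the defining formula is analytic). -/
def JExt (a b c : ℂ) (ρ : ℝ) (fc : ℕ → ℂ → ℂ) (hJ : ℕ → ℂ → ℂ) : Prop :=
  (∀ n < 2, hJ n = 0) ∧
  ∀ n, 2 ≤ n → DifferentiableOn ℂ (hJ n) (Metric.ball c ρ) ∧
    ∀ z ∈ Metric.ball c ρ, OffCut z → hJ n z = JOp a b ((n : ℂ) - 1) (fc n) z

/-- `h(x,w) = Σ_{n≥2} J_n[f_n](x) wⁿ` (via the extensions `hJ`). -/
noncomputable def hFun (hJ : ℕ → ℂ → ℂ) (x w : ℂ) : ℂ := ∑' n : ℕ, hJ n x * w ^ n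

/-- `Φ[f](w) = Σ_{n≥2} Φ_n[f_n] wⁿ`. -/
noncomputable def PhiFun (a b : ℂ) (fc : ℕ → ℂ → ℂ) (w : ℂ) : ℂ :=
  ∑' n : ℕ, PhiOp a b ((n : ℂ) - 1) (fc n) * w ^ n


section Helpers

open Filter Topology Asymptotics FormalMultilinearSeries

private lemma summable_aux {c : ℕ → ℂ} {r₀ C : ℝ} (hr₀ : 0 < r₀)
    (hbd : ∀ n, ‖c n‖ * r₀ ^ n ≤ C) {s : ℝ} (hs : 0 ≤ s) (hsr : s < r₀) :
    Summable (fun n => ‖c n‖ * s ^ n) := by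
  have h1 : s / r₀ < 1 := (div_lt_one hr₀).2 hsr
  have h0 : 0 ≤ s / r₀ := div_nonneg hs hr₀.le
  refine Summable.of_nonneg_of_le (fun n => by positivity) (fun n => ?_)
    ((summable_geometric_of_lt_one h0 h1).mul_left C)
  have he : ‖c n‖ * s ^ n = (‖c n‖ * r₀ ^ n) * (s / r₀) ^ n := by
    rw [div_pow]
    field_simp
  rw [he]
  exact mul_le_mul_of_nonneg_right (hbd n) (by positivity)

private lemma summable_aux' {c : ℕ → ℂ} {r₀ C : ℝ} (hr₀ : 0 < r₀)
    (hbd : ∀ n, ‖c n‖ * r₀ ^ n ≤ C) {w : ℂ} (hw : ‖w‖ < r₀) :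
    Summable (fun n => c n * w ^ n) := by
  apply Summable.of_norm
  have := summable_aux hr₀ hbd (norm_nonneg w) hw
  simpa [norm_mul, norm_pow] using this

private lemma hasFPS {c : ℕ → ℂ} {r₀ C : ℝ} (hr₀ : 0 < r₀)
    (hbd : ∀ n, ‖c n‖ * r₀ ^ n ≤ C) {r : ℝ} (hr : 0 < r) (hrr : r < r₀) :
    HasFPowerSeriesOnBall (fun w => ∑' n, c n * w ^ n) (ofScalars ℂ c) 0 (ENNReal.ofReal r) := by
  constructor
  · have hs : Summable (fun n => ‖(ofScalars ℂ c) n‖ * (r.toNNReal : ℝ) ^ n) := by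
      simp only [ofScalars_norm, Real.coe_toNNReal _ hr.le]
      exact summable_aux hr₀ hbd hr.le hrr
    exact (ofScalars ℂ c).le_radius_of_summable hs
  · simp [hr]
  · intro y hy
    have hy' : ‖y‖ < r := by
      have := EMetric.mem_ball.mp hy
      rw [edist_zero_right] at this
      simpa [ENNReal.lt_ofReal_iff_toReal_lt] using this
    have hsum := (summable_aux' hr₀ hbd (lt_trans hy' hrr)).hasSum
    rw [zero_add]
    convert hsum using 1
    all_goals first
      | rfl
      | (funext n
         rw [ofScalars_apply_eq]
         simp [smul_eq_mul])

private lemma analyticAt_of_bd {c : ℕ → ℂ} {r₀ C : ℝ} (hr₀ : 0 < r₀)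
    (hbd : ∀ n, ‖c n‖ * r₀ ^ n ≤ C) {z : ℂ} (hz : ‖z‖ < r₀) :
    AnalyticAt ℂ (fun w => ∑' n, c n * w ^ n) z := by
  obtain ⟨r, hzr, hrr₀⟩ := exists_between hz
  have hr : 0 < r := lt_of_le_of_lt (norm_nonneg z) hzr
  refine (hasFPS hr₀ hbd hr hrr₀).analyticAt_of_mem ?_
  rw [EMetric.mem_ball, edist_zero_right]
  simpa [ENNReal.lt_ofReal_iff_toReal_lt] using hzr

private lemma rep_analysis {g : ℂ → ℂ} {c : ℕ → ℂ} {r₀ C : ℝ} (hr₀ : 0 < r₀)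
    (hbd : ∀ n, ‖c n‖ * r₀ ^ n ≤ C)
    (heq : ∀ w : ℂ, ‖w‖ < r₀ → g w = ∑' n, c n * w ^ n)
    (q : ℕ) (hvan : ∀ n < q, c n = 0) :
    (∀ z : ℂ, ‖z‖ < r₀ → AnalyticAt ℂ g z) ∧
    ∃ u : ℂ → ℂ, (∀ z : ℂ, ‖z‖ < r₀ → AnalyticAt ℂ u z) ∧
      (∀ w : ℂ, ‖w‖ < r₀ → g w = w ^ q * u w) := by
  have hgana : ∀ z : ℂ, ‖z‖ < r₀ → AnalyticAt ℂ g z := by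
    intro z hz
    refine (analyticAt_of_bd hr₀ hbd hz).congr ?_
    have : Metric.ball (0:ℂ) r₀ ∈ 𝓝 z := Metric.isOpen_ball.mem_nhds
      (by simpa [mem_ball_zero_iff] using hz)
    filter_upwards [this] with w hw
    exact (heq w (mem_ball_zero_iff.mp hw)).symm
  refine ⟨hgana, fun w => ∑' n, c (n + q) * w ^ n, ?_, ?_⟩
  · have hbd' : ∀ n, ‖c (n + q)‖ * r₀ ^ n ≤ C / r₀ ^ q := by
      intro n
      rw [le_div_iff₀ (by positivity)]
      calc ‖c (n + q)‖ * r₀ ^ n * r₀ ^ q = ‖c (n + q)‖ * r₀ ^ (n + q) := by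
            rw [mul_assoc, ← pow_add]
        _ ≤ C := hbd (n + q)
    exact fun z hz => analyticAt_of_bd hr₀ hbd' hz
  · intro w hw
    rw [heq w hw]
    have hsum : Summable (fun n => c n * w ^ n) := summable_aux' hr₀ hbd hw
    have h1 := Summable.sum_add_tsum_nat_add (f := fun n => c n * w ^ n) q hsum
    have h2 : (∑ i ∈ Finset.range q, c i * w ^ i) = 0 := by
      apply Finset.sum_eq_zero
      intro i hi
      rw [hvan i (Finset.mem_range.mp hi), zero_mul]
    rw [← h1, h2, zero_add]
    have h3 : (fun n => c (n + q) * w ^ (n + q)) = fun n => (c (n + q) * w ^ n) * w ^ q := by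
      funext n; rw [pow_add]; ring
    rw [h3, tsum_mul_right]
    ring

private lemma analyticAt_deriv {g : ℂ → ℂ} (hg : AnalyticAt ℂ g 0) :
    AnalyticAt ℂ (deriv g) 0 := by
  have : AnalyticOnNhd ℂ g {z | AnalyticAt ℂ g z} := fun z hz => hz
  exact this.deriv 0 hg

private lemma iteratedDeriv_add_at {k : ℕ} {g₁ g₂ : ℂ → ℂ}
    (h₁ : AnalyticAt ℂ g₁ 0) (h₂ : AnalyticAt ℂ g₂ 0) :
    iteratedDeriv k (fun w => g₁ w + g₂ w) 0 = iteratedDeriv k g₁ 0 + iteratedDeriv k g₂ 0 := by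
  induction k generalizing g₁ g₂ with
  | zero => simp
  | succ k ih =>
    rw [iteratedDeriv_succ', iteratedDeriv_succ', iteratedDeriv_succ']
    have hev : deriv (fun w => g₁ w + g₂ w) =ᶠ[𝓝 0] fun w => deriv g₁ w + deriv g₂ w := by
      filter_upwards [h₁.eventually_analyticAt, h₂.eventually_analyticAt] with y hy₁ hy₂
      exact deriv_add hy₁.differentiableAt hy₂.differentiableAt
    rw [hev.iteratedDeriv_eq k]
    exact ih (analyticAt_deriv h₁) (analyticAt_deriv h₂)

private lemma iteratedDeriv_mul_id_zero : ∀ (k : ℕ) (g : ℂ → ℂ), AnalyticAt ℂ g 0 →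
    (∀ j < k, iteratedDeriv j g 0 = 0) → iteratedDeriv k (fun w => w * g w) 0 = 0 := by
  intro k
  induction k with
  | zero => intro g _ _; simp
  | succ k ih =>
    intro g hg hv
    rw [iteratedDeriv_succ']
    have hev : deriv (fun w => w * g w) =ᶠ[𝓝 0] fun w => g w + w * deriv g w := by
      filter_upwards [hg.eventually_analyticAt] with y hy
      rw [deriv_fun_mul differentiableAt_fun_id hy.differentiableAt]
      simp
    rw [hev.iteratedDeriv_eq k]
    have hg' := analyticAt_deriv hg
    have hmul : AnalyticAt ℂ (fun w : ℂ => w * deriv g w) 0 := by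
      exact (analyticAt_id.mul hg')
    rw [iteratedDeriv_add_at hg hmul]
    rw [hv k (Nat.lt_succ_self k), zero_add]
    refine ih (deriv g) hg' (fun j hj => ?_)
    rw [← iteratedDeriv_succ']
    exact hv (j + 1) (by omega)

private lemma vanish_of_bigO : ∀ (q : ℕ) (g : ℂ → ℂ), AnalyticAt ℂ g 0 →
    g =O[𝓝[≠] (0:ℂ)] (fun w => w ^ q) → ∀ k < q, iteratedDeriv k g 0 = 0 := by
  intro q
  induction q with
  | zero => intro g _ _ k hk; omega
  | succ q ih =>
    intro g hg hO k hk
    have inst : (𝓝[≠] (0:ℂ)).NeBot := NormedField.nhdsNE_neBot 0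
    have hg0 : g 0 = 0 := by
      have hpow : Tendsto (fun w : ℂ => w ^ (q + 1)) (𝓝[≠] (0:ℂ)) (𝓝 0) := by
        have : Tendsto (fun w : ℂ => w ^ (q + 1)) (𝓝 (0:ℂ)) (𝓝 ((0:ℂ) ^ (q + 1))) :=
          (continuous_pow (q + 1)).tendsto 0
        rw [zero_pow (Nat.succ_ne_zero q)] at this
        exact this.mono_left nhdsWithin_le_nhds
      have h1 : Tendsto g (𝓝[≠] (0:ℂ)) (𝓝 0) := hO.trans_tendsto hpow
      have h2 : Tendsto g (𝓝[≠] (0:ℂ)) (𝓝 (g 0)) :=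
        hg.continuousAt.continuousWithinAt.tendsto
      exact tendsto_nhds_unique h2 h1
    obtain ⟨pser, hp⟩ := hg
    have hg₁ : AnalyticAt ℂ (dslope g 0) 0 := ⟨_, hp.has_fpower_series_dslope_fslope⟩
    have hgeq : (fun w => w * dslope g 0 w) = g := by
      funext w
      rcases eq_or_ne w 0 with h | h
      · simp [h, hg0]
      · rw [dslope_of_ne _ h, slope_def_field, hg0]
        field_simp
        ring
    have hO₁ : (dslope g 0) =O[𝓝[≠] (0:ℂ)] (fun w => w ^ q) := by
      rw [isBigO_iff] at hO ⊢
      obtain ⟨cc, hc⟩ := hO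
      refine ⟨cc, ?_⟩
      filter_upwards [hc, self_mem_nhdsWithin] with w hw hw0
      have hw0' : w ≠ 0 := hw0
      rw [dslope_of_ne _ hw0', slope_def_field, hg0, sub_zero, sub_zero, norm_div]
      rw [div_le_iff₀ (norm_pos_iff.mpr hw0')]
      calc ‖g w‖ ≤ cc * ‖w ^ (q + 1)‖ := hw
        _ = cc * ‖w ^ q‖ * ‖w‖ := by rw [pow_succ, norm_mul]; ring
    have IH := ih (dslope g 0) hg₁ hO₁
    rw [← hgeq]
    exact iteratedDeriv_mul_id_zero k _ hg₁ (fun j hj => IH j (by omega))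

private lemma bigO_of_fac {q : ℕ} {g u : ℂ → ℂ} {r₀ : ℝ} (hr₀ : 0 < r₀)
    (hu : ∀ z : ℂ, ‖z‖ < r₀ → AnalyticAt ℂ u z)
    (hfac : ∀ w : ℂ, ‖w‖ < r₀ → g w = w ^ q * u w) :
    g =O[𝓝 (0:ℂ)] (fun w => w ^ q) := by
  have hcont : ContinuousAt u 0 := (hu 0 (by simpa using hr₀)).continuousAt
  rw [isBigO_iff]
  refine ⟨‖u 0‖ + 1, ?_⟩
  have h1 : ∀ᶠ w : ℂ in 𝓝 0, dist (u w) (u 0) < 1 :=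
    Metric.tendsto_nhds.mp hcont.tendsto 1 one_pos
  have h2 : ∀ᶠ w : ℂ in 𝓝 0, ‖w‖ < r₀ := by
    filter_upwards [Metric.ball_mem_nhds (0:ℂ) hr₀] with w hw
    exact mem_ball_zero_iff.mp hw
  filter_upwards [h1, h2] with w hw1 hw2
  rw [hfac w hw2, norm_mul]
  have hub : ‖u w‖ ≤ ‖u 0‖ + 1 := by
    have := norm_sub_norm_le (u w) (u 0)
    rw [← dist_eq_norm] at this
    linarith
  calc ‖w ^ q‖ * ‖u w‖ ≤ ‖w ^ q‖ * (‖u 0‖ + 1) :=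
        mul_le_mul_of_nonneg_left hub (norm_nonneg _)
    _ = (‖u 0‖ + 1) * ‖w ^ q‖ := by ring

private lemma vanish_of_rep {g : ℂ → ℂ} {c : ℕ → ℂ} {r₀ C : ℝ} (hr₀ : 0 < r₀)
    (hbd : ∀ n, ‖c n‖ * r₀ ^ n ≤ C)
    (heq : ∀ w : ℂ, ‖w‖ < r₀ → g w = ∑' n, c n * w ^ n)
    {q : ℕ} (hvan : ∀ n < q, c n = 0) : ∀ k < q, iteratedDeriv k g 0 = 0 := by
  obtain ⟨hana, u, hu, hfac⟩ := rep_analysis hr₀ hbd heq q hvan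
  exact vanish_of_bigO q g (hana 0 (by simpa using hr₀))
    ((bigO_of_fac hr₀ hu hfac).mono nhdsWithin_le_nhds)

private lemma rep_exists (cc : ℕ → ℂ) (h0 : cc 0 = 0) :
    ∃ (c : ℕ → ℂ) (r₀ C : ℝ), 0 < r₀ ∧ (∀ n, ‖c n‖ * r₀ ^ n ≤ C) ∧
      (∀ w : ℂ, (∑' n, cc n * w ^ n) = ∑' n, c n * w ^ n) ∧
      (∀ n, c n = cc n ∨ c n = 0) := by
  by_cases hS : ∃ w₀ : ℂ, w₀ ≠ 0 ∧ Summable (fun n => cc n * w₀ ^ n)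
  · obtain ⟨w₀, hw₀, hsum⟩ := hS
    refine ⟨cc, ‖w₀‖, ?_⟩
    have hbdd : BddAbove (Set.range fun n => ‖cc n * w₀ ^ n‖) :=
      hsum.tendsto_atTop_zero.norm.bddAbove_range
    obtain ⟨C, hC⟩ := hbdd
    refine ⟨C, norm_pos_iff.mpr hw₀, fun n => ?_, fun _ => rfl, fun n => Or.inl rfl⟩
    have := hC (Set.mem_range_self n)
    simpa [norm_mul, norm_pow] using this
  · push_neg at hS
    refine ⟨fun _ => 0, 1, 0, one_pos, by simp, fun w => ?_, fun n => Or.inr rfl⟩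
    rcases eq_or_ne w 0 with h | h
    · rw [h]
      have hz : (∑' n, cc n * (0:ℂ) ^ n) = cc 0 := by
        rw [tsum_eq_single 0 (fun n hn => by simp [zero_pow hn])]
        simp
      simp [hz, h0]
    · rw [tsum_eq_zero_of_not_summable (hS w h)]
      simp

private lemma pow_O {m n : ℕ} (h : m ≤ n) :
    (fun w : ℂ => w ^ n) =O[𝓝 (0:ℂ)] (fun w => w ^ m) := by
  rw [isBigO_iff]
  refine ⟨1, ?_⟩
  filter_upwards [Metric.ball_mem_nhds (0:ℂ) one_pos] with w hw
  rw [mem_ball_zero_iff] at hw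
  rw [one_mul, norm_pow, norm_pow]
  exact pow_le_pow_of_le_one (norm_nonneg w) hw.le h

private lemma PhiOp_zero (a b ν : ℂ) : PhiOp a b ν 0 = 0 := by
  simp [PhiOp]

private lemma JOp_zero (a b ν : ℂ) (z : ℂ) : JOp a b ν 0 z = 0 := by
  simp [JOp, PhiOp_zero]

private lemma hJ_zero_aux {c : ℂ} {ρ : ℝ} (hρ : 0 < ρ) {h : ℂ → ℂ}
    (hdiff : DifferentiableOn ℂ h (Metric.ball c ρ))
    (hform : ∀ z ∈ Metric.ball c ρ, OffCut z → h z = 0) :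
    ∀ x ∈ Metric.ball c ρ, h x = 0 := by
  obtain ⟨z₀, hz₀b, hz₀im⟩ : ∃ z₀, z₀ ∈ Metric.ball c ρ ∧ z₀.im ≠ 0 := by
    rcases ne_or_eq (c.im + ρ / 2) 0 with hne | heq
    · refine ⟨c + (ρ / 2 : ℝ) * Complex.I, ?_, by simpa using hne⟩
      rw [Metric.mem_ball, dist_eq_norm, add_sub_cancel_left, norm_mul, Complex.norm_I, mul_one,
        Complex.norm_real, Real.norm_eq_abs, abs_of_pos (by linarith)]
      linarith
    · refine ⟨c - (ρ / 2 : ℝ) * Complex.I, ?_, ?_⟩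
      · rw [Metric.mem_ball, dist_eq_norm, sub_sub_cancel_left, norm_neg, norm_mul,
          Complex.norm_I, mul_one, Complex.norm_real, Real.norm_eq_abs, abs_of_pos (by linarith)]
        linarith
      · simp only [Complex.sub_im, Complex.mul_im, Complex.ofReal_re, Complex.I_im,
          Complex.ofReal_im, Complex.I_re, mul_zero, mul_one, zero_mul, add_zero, sub_eq_zero]
        intro habs
        linarith
  have hana : AnalyticOnNhd ℂ h (Metric.ball c ρ) := hdiff.analyticOnNhd Metric.isOpen_ball
  have hopen : IsOpen (Metric.ball c ρ ∩ {z : ℂ | z.im ≠ 0}) := by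
    refine Metric.isOpen_ball.inter ?_
    exact Complex.continuous_im.isOpen_preimage _ isOpen_ne
  have hev : h =ᶠ[𝓝 z₀] 0 := by
    filter_upwards [hopen.mem_nhds ⟨hz₀b, hz₀im⟩] with z hz
    exact hform z hz.1 (Or.inl hz.2)
  have := hana.eqOn_zero_of_preconnected_of_eventuallyEq_zero
    (convex_ball c ρ).isPreconnected hz₀b hev
  exact fun x hx => this hx

end Helpers

open Filter Topology Asymptotics

/-- if `f ∈ Π` has a zero of order `p ≥ 2` at `w = 0` (`f_n ≡ 0` for `n < p`),
then `Φ[f]` and `h(x,·)` have zeros of order `≥ p` at `w = 0`, and — under the hypotheses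
guaranteeing that the compositions are defined on `Δ_δ` — the remainder
`R₀[f](x,w) = f(x,w+h) - f(x,w) - Φ[f](w+h) + Φ[f](w)`, and hence also
`R[f] = (1+∂_w h)⁻¹ R₀[f]`, has a zero of order `≥ 2p-1` at `w = 0`
(zeros of order `≥ q` being expressed by vanishing of the iterated derivatives of order `< q`). -/
theorem stmt17 (a b c : ℂ) (ha : 0 < a.re) (hb : 0 < b.re) (hc : c = (b - a) / (a + b))
    (ρmin ρ0 : ℝ) (hρmin : 0 < ρmin)
    (hm : (-1 : ℂ) ∈ Metric.ball c ρmin) (hp : (1 : ℂ) ∈ Metric.ball c ρmin)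
    (hρ0 : ρmin < ρ0)
    (ρ : ℝ) (hρ : ρ ∈ Icc ρmin ρ0) (R : ℝ) (hR : 0 < R) (δ : ℝ) (hδ : δ ∈ Ioo (0 : ℝ) (1 / 2))
    (f : ℂ → ℂ → ℂ) (fc hJ : ℕ → ℂ → ℂ)
    (hPi : PiSetup c ρ R f fc) (hJe : JExt a b c ρ fc hJ)
    (p : ℕ) (hp2 : 2 ≤ p) (hord : ∀ n < p, fc n = 0)
    -- hypotheses guaranteeing that the compositions are defined on `Δ_δ`:
    (hcomp : ∀ x ∈ Metric.ball c (ρ * Real.exp (-δ)), ∀ w : ℂ, ‖w‖ < R * Real.exp (-δ) →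
      ‖w + hFun hJ x w‖ ≤ R * Real.exp (-(δ / 2)))
    (hder : ∀ x ∈ Metric.ball c (ρ * Real.exp (-δ)), ∀ w : ℂ, ‖w‖ < R * Real.exp (-δ) →
      ‖deriv (hFun hJ x) w‖ < 1) :
    (∀ k < p, iteratedDeriv k (PhiFun a b fc) 0 = 0) ∧
    (∀ x ∈ Metric.ball c ρ, ∀ k < p, iteratedDeriv k (hFun hJ x) 0 = 0) ∧
    (∀ x ∈ Metric.ball c (ρ * Real.exp (-δ)), ∀ k < 2 * p - 1,
      iteratedDeriv k (fun w =>
        f x (w + hFun hJ x w) - f x w -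
          PhiFun a b fc (w + hFun hJ x w) + PhiFun a b fc w) 0 = 0) ∧
    (∀ x ∈ Metric.ball c (ρ * Real.exp (-δ)), ∀ k < 2 * p - 1,
      iteratedDeriv k (fun w =>
        (1 + deriv (hFun hJ x) w)⁻¹ *
          (f x (w + hFun hJ x w) - f x w -
            PhiFun a b fc (w + hFun hJ x w) + PhiFun a b fc w)) 0 = 0) := by
    classical
  obtain ⟨hdf, hcont, hfc0, hfc1, hsum⟩ := hPi
  obtain ⟨hJlt2, hJge2⟩ := hJe
  have ρpos : 0 < ρ := lt_of_lt_of_le hρmin hρ.1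
  have hδpos : 0 < δ := hδ.1
  have hsub : Metric.ball c (ρ * Real.exp (-δ)) ⊆ Metric.ball c ρ := by
    apply Metric.ball_subset_ball
    have h1 : Real.exp (-δ) ≤ 1 := Real.exp_le_one_iff.mpr (by linarith)
    nlinarith
  -- Φ coefficients and representation
  have hcphivan : ∀ n < p, PhiOp a b ((n:ℂ) - 1) (fc n) = 0 := by
    intro n hn
    rw [hord n hn, PhiOp_zero]
  obtain ⟨cΦ, rΦ, CΦ, hrΦ, hbdΦ, heqΦ0, hcasesΦ⟩ :=
    rep_exists (fun n => PhiOp a b ((n:ℂ) - 1) (fc n))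
      (by simpa using hcphivan 0 (by omega))
  have heqΦ : ∀ w : ℂ, PhiFun a b fc w = ∑' n, cΦ n * w ^ n := fun w => heqΦ0 w
  have hvanΦ : ∀ n < p, cΦ n = 0 := fun n hn =>
    (hcasesΦ n).elim (fun h => h.trans (hcphivan n hn)) id
  have part1 : ∀ k < p, iteratedDeriv k (PhiFun a b fc) 0 = 0 :=
    vanish_of_rep hrΦ hbdΦ (fun w _ => heqΦ w) hvanΦ
  -- hJ vanishing below p
  have hJzero : ∀ x ∈ Metric.ball c ρ, ∀ n < p, hJ n x = 0 := by
    intro x hx n hn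
    rcases lt_or_ge n 2 with h2 | h2
    · rw [hJlt2 n h2]; rfl
    · obtain ⟨hdiff, hform⟩ := hJge2 n h2
      refine hJ_zero_aux ρpos hdiff (fun z hz hoff => ?_) x hx
      rw [hform z hz hoff, hord n hn, JOp_zero]
  -- representation of h(x,·)
  have Hrep : ∀ x ∈ Metric.ball c ρ, ∃ (cH : ℕ → ℂ) (rH CH : ℝ), 0 < rH ∧
      (∀ n, ‖cH n‖ * rH ^ n ≤ CH) ∧ (∀ w : ℂ, hFun hJ x w = ∑' n, cH n * w ^ n) ∧
      (∀ n < p, cH n = 0) := by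
    intro x hx
    obtain ⟨cH, rH, CH, h1, h2, h3, h4⟩ := rep_exists (fun n => hJ n x)
      (by simpa using hJzero x hx 0 (by omega))
    exact ⟨cH, rH, CH, h1, h2, fun w => h3 w,
      fun n hn => (h4 n).elim (fun h => h.trans (hJzero x hx n hn)) id⟩
  have part2 : ∀ x ∈ Metric.ball c ρ, ∀ k < p, iteratedDeriv k (hFun hJ x) 0 = 0 := by
    intro x hx
    obtain ⟨cH, rH, CH, hrH, hbdH, heqH, hvanH⟩ := Hrep x hx
    exact vanish_of_rep hrH hbdH (fun w _ => heqH w) hvanH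
  -- bound for the f-coefficients
  have hR2 : 0 < R / 2 := by linarith
  have frep : ∀ x ∈ Metric.ball c ρ, ∃ Cf, ∀ n, ‖fc n x‖ * (R / 2) ^ n ≤ Cf := by
    intro x hx
    have hmem : ((R / 2 : ℝ) : ℂ) ∈ Metric.ball (0:ℂ) R := by
      rw [mem_ball_zero_iff, Complex.norm_real, Real.norm_eq_abs, abs_of_pos hR2]
      linarith
    have hsum2 := (hsum x hx _ hmem).summable
    obtain ⟨Cf, hC⟩ := hsum2.tendsto_atTop_zero.norm.bddAbove_range
    refine ⟨Cf, fun n => ?_⟩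
    have := hC (Set.mem_range_self n)
    simpa [norm_mul, norm_pow, Complex.norm_real, Real.norm_eq_abs, abs_of_pos hR, abs_of_pos hR2] using this
  -- main part
  have main34 : ∀ x ∈ Metric.ball c (ρ * Real.exp (-δ)),
      (∀ k < 2 * p - 1, iteratedDeriv k (fun w =>
          f x (w + hFun hJ x w) - f x w -
            PhiFun a b fc (w + hFun hJ x w) + PhiFun a b fc w) 0 = 0) ∧
      (∀ k < 2 * p - 1, iteratedDeriv k (fun w =>
          (1 + deriv (hFun hJ x) w)⁻¹ *
            (f x (w + hFun hJ x w) - f x w -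
              PhiFun a b fc (w + hFun hJ x w) + PhiFun a b fc w)) 0 = 0) := by
    intro x hx
    have hx' : x ∈ Metric.ball c ρ := hsub hx
    obtain ⟨cH, rH, CH, hrH, hbdH, heqH, hvanH⟩ := Hrep x hx'
    obtain ⟨Cf, hbdf⟩ := frep x hx'
    set H : ℂ → ℂ := hFun hJ x with hHdef
    set PF : ℂ → ℂ := PhiFun a b fc with hPFdef
    set F : ℂ → ℂ := fun w => f x w - PF w with hFdef
    set ν : ℂ → ℂ := fun w => w + H w with hνdef
    set rF : ℝ := min (R / 2) rΦ with hrFdef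
    have hrF : 0 < rF := lt_min hR2 hrΦ
    have hbdF : ∀ n, ‖fc n x - cΦ n‖ * rF ^ n ≤ Cf + CΦ := by
      intro n
      have hrFnn : (0:ℝ) ≤ rF := hrF.le
      have h1 : ‖fc n x‖ * rF ^ n ≤ Cf :=
        le_trans (mul_le_mul_of_nonneg_left
          (pow_le_pow_left₀ hrFnn (min_le_left _ _) n) (norm_nonneg _)) (hbdf n)
      have h2 : ‖cΦ n‖ * rF ^ n ≤ CΦ :=
        le_trans (mul_le_mul_of_nonneg_left
          (pow_le_pow_left₀ hrFnn (min_le_right _ _) n) (norm_nonneg _)) (hbdΦ n)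
      calc ‖fc n x - cΦ n‖ * rF ^ n ≤ (‖fc n x‖ + ‖cΦ n‖) * rF ^ n :=
            mul_le_mul_of_nonneg_right (norm_sub_le _ _) (by positivity)
        _ = ‖fc n x‖ * rF ^ n + ‖cΦ n‖ * rF ^ n := by ring
        _ ≤ Cf + CΦ := add_le_add h1 h2
    have heqF : ∀ w : ℂ, ‖w‖ < rF → F w = ∑' n, (fc n x - cΦ n) * w ^ n := by
      intro w hw
      have hwR : w ∈ Metric.ball (0:ℂ) R := by
        rw [mem_ball_zero_iff]
        have := lt_of_lt_of_le hw (min_le_left _ _)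
        linarith
      have h1 : f x w = ∑' n, fc n x * w ^ n := ((hsum x hx' w hwR).tsum_eq).symm
      have h2 : PF w = ∑' n, cΦ n * w ^ n := heqΦ w
      have s1 : Summable (fun n => fc n x * w ^ n) := (hsum x hx' w hwR).summable
      have s2 : Summable (fun n => cΦ n * w ^ n) :=
        summable_aux' hrΦ hbdΦ (lt_of_lt_of_le hw (min_le_right _ _))
      rw [hFdef]
      simp only
      rw [h1, h2, ← Summable.tsum_sub s1 s2]
      congr 1
      funext n
      ring
    have hvanF : ∀ n < p, fc n x - cΦ n = 0 := by
      intro n hn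
      have h1 : fc n x = 0 := by rw [hord n hn]; rfl
      rw [h1, hvanΦ n hn, sub_zero]
    obtain ⟨hanaF, uF, huF, hfacF⟩ := rep_analysis hrF hbdF heqF p hvanF
    obtain ⟨hanaH, uH, huH, hfacH⟩ := rep_analysis hrH hbdH (fun w _ => heqH w) p hvanH
    have hanaF0 : AnalyticAt ℂ F 0 := hanaF 0 (by simpa using hrF)
    have hanaH0 : AnalyticAt ℂ H 0 := hanaH 0 (by simpa using hrH)
    have hH0 : H 0 = 0 := by
      rw [heqH 0, tsum_eq_single 0 (fun n hn => by simp [zero_pow hn])]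
      simp [hvanH 0 (by omega)]
    have hι : AnalyticAt ℂ ν 0 := by
      rw [hνdef]
      exact analyticAt_id.add hanaH0
    have hν0 : ν 0 = 0 := by simp [hνdef, hH0]
    have hνtendsto : Filter.Tendsto ν (𝓝 0) (𝓝 0) := by
      have := hι.continuousAt.tendsto
      rwa [hν0] at this
    have hcompF : AnalyticAt ℂ (fun w => F (ν w)) 0 := by
      have h1 : AnalyticAt ℂ F (ν 0) := by rw [hν0]; exact hanaF0
      simpa [Function.comp_def] using h1.comp hι
    have hGana : AnalyticAt ℂ (fun w => F (ν w) - F w) 0 := hcompF.sub hanaF0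
    -- big-O estimates
    have hHO : H =O[𝓝 (0:ℂ)] (fun w => w ^ p) := bigO_of_fac hrH huH hfacH
    have hνO : ν =O[𝓝 (0:ℂ)] (fun w : ℂ => w) := by
      have h1 : (fun w : ℂ => w ^ p) =O[𝓝 (0:ℂ)] (fun w : ℂ => w) := by
        have := pow_O (m := 1) (n := p) (by omega)
        simpa [pow_one] using this
      have h3 : (fun w : ℂ => w) =O[𝓝 (0:ℂ)] (fun w : ℂ => w) := Asymptotics.isBigO_refl _ _
      have h4 := h3.add (hHO.trans h1)
      rw [hνdef]
      exact h4
    have hSO : (fun w => ∑ i ∈ Finset.range p, ν w ^ i * w ^ (p - 1 - i))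
        =O[𝓝 (0:ℂ)] (fun w : ℂ => w ^ (p - 1)) := by
      refine Asymptotics.IsBigO.fun_sum (fun i hi => ?_)
      have h1 : (fun w => ν w ^ i) =O[𝓝 (0:ℂ)] (fun w : ℂ => w ^ i) := hνO.pow i
      have h2 := h1.mul (Asymptotics.isBigO_refl (fun w : ℂ => w ^ (p - 1 - i)) (𝓝 (0:ℂ)))
      have h3 : (fun w : ℂ => w ^ i * w ^ (p - 1 - i)) = fun w : ℂ => w ^ (p - 1) := by
        funext w
        rw [← pow_add]
        congr 1
        have := Finset.mem_range.mp hi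
        omega
      rwa [h3] at h2
    have hfacdiff : (fun w => ν w ^ p - w ^ p) =O[𝓝 (0:ℂ)] (fun w : ℂ => w ^ (2 * p - 1)) := by
      have hgeom : (fun w => ν w ^ p - w ^ p)
          = fun w => (∑ i ∈ Finset.range p, ν w ^ i * w ^ (p - 1 - i)) * H w := by
        funext w
        rw [← geom_sum₂_mul (ν w) w p]
        congr 1
        simp [hνdef]
      rw [hgeom]
      have h5 := hSO.mul hHO
      have h6 : (fun w : ℂ => w ^ (p - 1) * w ^ p) = fun w : ℂ => w ^ (2 * p - 1) := by
        funext w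
        rw [← pow_add]
        congr 1
        omega
      rwa [h6] at h5
    have huFν : Filter.Tendsto (fun w => uF (ν w)) (𝓝 0) (𝓝 (uF 0)) :=
      ((huF 0 (by simpa using hrF)).continuousAt.tendsto).comp hνtendsto
    have term1 : (fun w => (ν w ^ p - w ^ p) * uF (ν w))
        =O[𝓝 (0:ℂ)] (fun w : ℂ => w ^ (2 * p - 1)) := by
      have h5 := hfacdiff.mul (huFν.isBigO_one ℂ)
      have h6 : (fun w : ℂ => w ^ (2 * p - 1) * (1:ℂ)) = fun w : ℂ => w ^ (2 * p - 1) := by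
        funext w; rw [mul_one]
      rwa [h6] at h5
    obtain ⟨K, t, ht, hlip⟩ :=
      ((huF 0 (by simpa using hrF)).contDiffAt (n := 1)).exists_lipschitzOnWith
    have hdiffu : (fun w => uF (ν w) - uF w) =O[𝓝 (0:ℂ)] H := by
      rw [Asymptotics.isBigO_iff]
      refine ⟨K, ?_⟩
      have h1 : ∀ᶠ w : ℂ in 𝓝 0, w ∈ t := ht
      have h2 : ∀ᶠ w : ℂ in 𝓝 0, ν w ∈ t :=
        hνtendsto.eventually (eventually_of_mem ht (fun y hy => hy))
      filter_upwards [h1, h2] with w hw1 hw2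
      have h3 := hlip.dist_le_mul _ hw2 _ hw1
      rw [dist_eq_norm, dist_eq_norm] at h3
      calc ‖uF (ν w) - uF w‖ ≤ K * ‖ν w - w‖ := h3
        _ = K * ‖H w‖ := by
            congr 2
            simp [hνdef]
    have term2 : (fun w => w ^ p * (uF (ν w) - uF w))
        =O[𝓝 (0:ℂ)] (fun w : ℂ => w ^ (2 * p - 1)) := by
      have h5 := (Asymptotics.isBigO_refl (fun w : ℂ => w ^ p) (𝓝 (0:ℂ))).mul
        (hdiffu.trans hHO)
      have h6 : (fun w : ℂ => w ^ p * w ^ p) = fun w : ℂ => w ^ (2 * p) := by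
        funext w; rw [← pow_add]; congr 1; omega
      rw [h6] at h5
      exact h5.trans (pow_O (by omega))
    have hGev : (fun w => F (ν w) - F w) =ᶠ[𝓝 (0:ℂ)]
        fun w => (ν w ^ p - w ^ p) * uF (ν w) + w ^ p * (uF (ν w) - uF w) := by
      have e1 : ∀ᶠ w : ℂ in 𝓝 0, ‖w‖ < rF := by
        filter_upwards [Metric.ball_mem_nhds (0:ℂ) hrF] with w hw
        exact mem_ball_zero_iff.mp hw
      have e2 : ∀ᶠ w : ℂ in 𝓝 0, ‖ν w‖ < rF := hνtendsto.eventually e1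
      filter_upwards [e1, e2] with w hw1 hw2
      rw [hfacF w hw1, hfacF (ν w) hw2]
      ring
    have hGO : (fun w => F (ν w) - F w) =O[𝓝 (0:ℂ)] (fun w : ℂ => w ^ (2 * p - 1)) :=
      hGev.trans_isBigO (term1.add term2)
    have hτ : (fun w => f x (w + H w) - f x w - PF (w + H w) + PF w)
        = fun w => F (ν w) - F w := by
      funext w
      simp only [hFdef, hνdef]
      ring
    have part3x : ∀ k < 2 * p - 1, iteratedDeriv k
        (fun w => f x (w + H w) - f x w - PF (w + H w) + PF w) 0 = 0 := by
      intro k hk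
      rw [hτ]
      exact vanish_of_bigO _ _ hGana (hGO.mono nhdsWithin_le_nhds) k hk
    refine ⟨part3x, ?_⟩
    -- part 4
    have hdH0 : deriv H 0 = 0 := by
      have := part2 x hx' 1 (by omega)
      rwa [iteratedDeriv_one] at this
    have hdH : AnalyticAt ℂ (deriv H) 0 := analyticAt_deriv hanaH0
    have hA : AnalyticAt ℂ (fun w => (1 + deriv H w)⁻¹) 0 := by
      refine AnalyticAt.inv ?_ ?_
      · exact analyticAt_const.add hdH
      · simp [hdH0]
    have hAO : (fun w => (1 + deriv H w)⁻¹) =O[𝓝 (0:ℂ)] (fun _ => (1:ℂ)) :=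
      hA.continuousAt.tendsto.isBigO_one ℂ
    have hτ4 : (fun w => (1 + deriv H w)⁻¹ * (f x (w + H w) - f x w - PF (w + H w) + PF w))
        = fun w => (1 + deriv H w)⁻¹ * (F (ν w) - F w) := by
      funext w
      simp only [hFdef, hνdef]
      ring
    have hτ4ana : AnalyticAt ℂ (fun w => (1 + deriv H w)⁻¹ * (F (ν w) - F w)) 0 :=
      hA.mul hGana
    have hτ4O : (fun w => (1 + deriv H w)⁻¹ * (F (ν w) - F w))
        =O[𝓝 (0:ℂ)] (fun w : ℂ => w ^ (2 * p - 1)) := by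
      have h5 := hAO.mul hGO
      have h6 : (fun w : ℂ => (1:ℂ) * w ^ (2 * p - 1)) = fun w : ℂ => w ^ (2 * p - 1) := by
        funext w; rw [one_mul]
      rwa [h6] at h5
    intro k hk
    rw [hτ4]
    exact vanish_of_bigO _ _ hτ4ana (hτ4O.mono nhdsWithin_le_nhds) k hk
  exact ⟨part1, part2, fun x hx => (main34 x hx).1, fun x hx => (main34 x hx).2⟩
end
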